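/- Let H be a monoid such that the reduced quotient H_red = H/H^× is finitely generated. Then for every nonunit a ∈ H there exists N = N(a) ∈ ℕ such that ρ(a^{tN}) = ρ(a^N) for every t ∈ ℕ; consequently the limit ρ̄(a) = lim_{n→∞} ρ(a^n) exists and equals ρ(a^N). -/

import Mathlib

open Filter Topology

/-- The set of factorization lengths of `a`: the set of all `k` such that `a` is a
product of `k` atoms (irreducibles); by convention it is `{0}` for units. -/
noncomputable def lengthSet (H : Type*) [CommMonoid H] (a : H) : Set ℕ :=
  open Classical in
  if IsUnit a then {0}
  else {k | ∃ f : Fin k → H, (∀ i, Irreducible (f i)) ∧ a = ∏ i, f i}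

/-- The elasticity `ρ(a) = max L(a) / min L(a)` of an element of a BF-monoid,
with `ρ(a) = 1` for units. -/
noncomputable def elasticity (H : Type*) [CommMonoid H] (a : H) : ℝ :=
  open Classical in
  if IsUnit a then 1
  else ((sSup (lengthSet H a) : ℕ) : ℝ) / ((sInf (lengthSet H a) : ℕ) : ℝ)

/-- The elasticity `ρ(H) = sup {ρ(a) : a ∈ H} ∈ ℝ≥1 ∪ {∞}` of the monoid `H`. -/
noncomputable def monoidElasticity (H : Type*) [CommMonoid H] : EReal :=
  ⨆ a : H, ((elasticity H a : ℝ) : EReal)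

/-- The set `R̄(H)` of asymptotic elasticities `ρ̄(a) = lim_{n → ∞} ρ(aⁿ)`
of nonunits `a ∈ H` (membership requires the limit to exist). -/
def asympSet (H : Type*) [CommMonoid H] : Set EReal :=
  {r | ∃ a : H, ¬ IsUnit a ∧
    Tendsto (fun n : ℕ => ((elasticity H (a ^ n) : ℝ) : EReal)) atTop (nhds r)}

/-- `H` is locally finitely generated: for every `a ∈ H` there are only finitely many
atoms, up to associates, dividing some power of `a`. -/
def LocallyFinitelyGenerated (H : Type*) [CommMonoid H] : Prop :=
  ∀ a : H, {u : Associates H | Irreducible u ∧ ∃ n : ℕ, u ∣ Associates.mk (a ^ n)}.Finite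

/-- `H` is a BF-monoid: atomic (every nonunit has a factorization into atoms) and
all sets of lengths are finite. -/
def IsBFMonoid (H : Type*) [CommMonoid H] : Prop :=
  (∀ a : H, ¬ IsUnit a → (lengthSet H a).Nonempty) ∧ ∀ a : H, (lengthSet H a).Finite

/-- `(k, ℓ) ≠ (0,0)` is a nice pair with respect to `(a, b)` if
`max L((aᵏbˡ)ᵗ) = t · max L(aᵏbˡ)` and `min L((aᵏbˡ)ᵗ) = t · min L(aᵏbˡ)` for all `t ∈ ℕ`. -/
def IsNicePair (H : Type*) [CommMonoid H] (a b : H) (k ℓ : ℕ) : Prop :=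
  ¬ (k = 0 ∧ ℓ = 0) ∧ ∀ t : ℕ, 0 < t →
    sSup (lengthSet H ((a ^ k * b ^ ℓ) ^ t)) = t * sSup (lengthSet H (a ^ k * b ^ ℓ)) ∧
    sInf (lengthSet H ((a ^ k * b ^ ℓ) ^ t)) = t * sInf (lengthSet H (a ^ k * b ^ ℓ))

/-- `H` is strongly primary: `H ≠ H^×` and for every nonunit `a` there is `n ∈ ℕ`
such that every product of `n` nonunits of `H` is divisible by `a`. -/
def StronglyPrimary (H : Type*) [CommMonoid H] : Prop :=
  (∃ a : H, ¬ IsUnit a) ∧ ∀ a : H, ¬ IsUnit a → ∃ n : ℕ, 0 < n ∧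
    ∀ f : Fin n → H, (∀ i, ¬ IsUnit (f i)) → a ∣ ∏ i, f i

/-- `H` is half-factorial: atomic and `|L(a)| = 1` for every `a ∈ H`. -/
def IsHalfFactorial (H : Type*) [CommMonoid H] : Prop :=
  ∀ a : H, ∃ k : ℕ, lengthSet H a = {k}




section Helpers

variable {M : Type*} [CommMonoid M]

lemma hlp_list_exp {k : ℕ} (g : Fin k → M) :
    ∀ l : List M, (∀ y ∈ l, ∃ i, y = g i) →
      ∃ e : Fin k → ℕ, l.prod = ∏ i, g i ^ e i ∧ ∑ i, e i = l.length := by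
  intro l
  induction l with
  | nil => exact fun _ => ⟨0, by simp, by simp⟩
  | cons y l ih =>
    intro h
    obtain ⟨e, he1, he2⟩ := ih (fun z hz => h z (List.mem_cons_of_mem _ hz))
    obtain ⟨i0, hi0⟩ := h y (List.mem_cons_self)
    refine ⟨fun j => e j + if j = i0 then 1 else 0, ?_, ?_⟩
    · have h1 : ∀ j, g j ^ (e j + if j = i0 then 1 else 0)
          = g j ^ e j * (if j = i0 then g j else 1) := by
        intro j; by_cases hj : j = i0 <;> simp [hj, pow_add]
      simp only [h1, Finset.prod_mul_distrib, Finset.prod_ite_eq']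
      simp [List.prod_cons, he1, hi0, mul_comm]
    · simp [Finset.sum_add_distrib, he2, List.length_cons, add_comm]

lemma hlp_exp_list {k : ℕ} (g : Fin k → M) (e : Fin k → ℕ) :
    ∃ l : List M, (∀ y ∈ l, ∃ i, y = g i ∧ e i ≠ 0) ∧ l.length = ∑ i, e i ∧
      l.prod = ∏ i, g i ^ e i := by
  classical
  have key : ∀ s : Finset (Fin k), ∃ l : List M, (∀ y ∈ l, ∃ i, y = g i ∧ e i ≠ 0) ∧
      l.length = ∑ i ∈ s, e i ∧ l.prod = ∏ i ∈ s, g i ^ e i := by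
    intro s
    induction s using Finset.induction with
    | empty => exact ⟨[], by simp, by simp, by simp⟩
    | @insert i0 s' hx ih =>
      obtain ⟨l, hl1, hl2, hl3⟩ := ih
      refine ⟨List.replicate (e i0) (g i0) ++ l, ?_, ?_, ?_⟩
      · intro y hy
        rcases List.mem_append.1 hy with hy | hy
        · refine ⟨i0, List.eq_of_mem_replicate hy, fun h0 => ?_⟩
          rw [h0] at hy; simp at hy
        · exact hl1 y hy
      · simp [hl2, Finset.sum_insert hx]
      · simp [List.prod_replicate, hl3, Finset.prod_insert hx]
  simpa using key Finset.univ

lemma hlp_unit_of_prod {k : ℕ} (g : Fin k → M) (e : Fin k → ℕ) (i : Fin k)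
    (hu : IsUnit (∏ j, g j ^ e j)) (hi : e i ≠ 0) : IsUnit (g i) := by
  have h1 : g i ∣ ∏ j, g j ^ e j :=
    dvd_trans (dvd_pow_self _ hi) (Finset.dvd_prod_of_mem _ (Finset.mem_univ i))
  exact isUnit_of_dvd_unit h1 hu

/-- transfer of irreducibility along `Associates.mk`, for plain `CancelCommMonoid`. -/
lemma hlp_irr_mk {H : Type*} [CancelCommMonoid H] {x : H} :
    Irreducible (Associates.mk x) ↔ Irreducible x := by
  constructor
  · intro h
    refine ⟨fun hu => h.not_isUnit (Associates.isUnit_mk.2 hu), fun b c hbc => ?_⟩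
    have := h.isUnit_or_isUnit (a := Associates.mk b) (b := Associates.mk c)
      (by rw [hbc, Associates.mk_mul_mk])
    simpa [Associates.isUnit_mk] using this
  · intro h
    refine ⟨fun hu => h.not_isUnit (Associates.isUnit_mk.1 hu), fun b c hbc => ?_⟩
    obtain ⟨b', rfl⟩ := Associates.mk_surjective b
    obtain ⟨c', rfl⟩ := Associates.mk_surjective c
    rw [Associates.mk_mul_mk, Associates.mk_eq_mk_iff_associated] at hbc
    obtain ⟨u, hu⟩ := hbc.symm
    have : x = b' * (c' * u) := by rw [← hu, mul_assoc]
    rcases h.isUnit_or_isUnit this with h' | h'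
    · exact Or.inl (Associates.isUnit_mk.2 h')
    · exact Or.inr (Associates.isUnit_mk.2 (isUnit_of_mul_isUnit_left (by rwa [mul_comm] at h')))

/-- cancellation in `Associates H` for a cancellative `H`. -/
lemma hlp_assoc_cancel {H : Type*} [CancelCommMonoid H] {c x y : Associates H}
    (h : c * x = c * y) : x = y := by
  obtain ⟨c', rfl⟩ := Associates.mk_surjective c
  obtain ⟨x', rfl⟩ := Associates.mk_surjective x
  obtain ⟨y', rfl⟩ := Associates.mk_surjective y
  rw [Associates.mk_mul_mk, Associates.mk_mul_mk, Associates.mk_eq_mk_iff_associated] at h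
  obtain ⟨u, hu⟩ := h
  rw [Associates.mk_eq_mk_iff_associated]
  exact ⟨u, mul_left_cancel (a := c') (by rw [← mul_assoc, hu])⟩

end Helpers


section Dickson

variable {k : ℕ}

local notation "γ" => ℕ × (Fin k → ℕ)

lemma dickson_fg (W : Set (ℕ × (Fin k → ℕ)))
    (hadd : ∀ x ∈ W, ∀ y ∈ W, x + y ∈ W)
    (hsub : ∀ x ∈ W, ∀ y ∈ W, y ≤ x → x - y ∈ W) :
    ∃ (m : ℕ) (g : Fin m → ℕ × (Fin k → ℕ)), (∀ j, g j ∈ W) ∧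
      ∀ x ∈ W, ∃ c : Fin m → ℕ, x = ∑ j, c j • g j := by
  classical
  set msr : γ → ℕ := fun x => x.1 + ∑ i, x.2 i with hmsr
  have msr_add : ∀ x y : γ, msr (x + y) = msr x + msr y := by
    intro x y; simp only [hmsr, Prod.fst_add, Prod.snd_add, Pi.add_apply,
      Finset.sum_add_distrib]; ring
  have msr_zero : ∀ x : γ, msr x = 0 → x = 0 := by
    intro x h
    simp only [hmsr] at h
    obtain ⟨h1, h2⟩ := Nat.add_eq_zero.1 h
    exact Prod.ext h1 (funext fun i => Finset.sum_eq_zero_iff.1 h2 i (Finset.mem_univ i))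
  have msr_mono : ∀ {x y : γ}, y ≤ x → msr y ≤ msr x := by
    intro x y h
    obtain ⟨h1, h2⟩ := Prod.le_def.1 h
    exact Nat.add_le_add h1 (Finset.sum_le_sum fun i _ => h2 i)
  have sub_add : ∀ {x y : γ}, y ≤ x → (x - y) + y = x := by
    intro x y h
    obtain ⟨h1, h2⟩ := Prod.le_def.1 h
    exact Prod.ext (Nat.sub_add_cancel h1) (funext fun i => Nat.sub_add_cancel (h2 i))
  set B : Set γ := {x | x ∈ W ∧ x ≠ 0 ∧ ∀ y, y ∈ W → y ≠ 0 → y ≤ x → y = x} with hB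
  have hanti : IsAntichain (· ≤ ·) B := fun p hp q hq hne hle => hne (hq.2.2 p hp.1 hp.2.1 hle)
  have hpwo : B.IsPWO := by
    have h1 : (Set.univ : Set ℕ).IsPWO := (Set.isWF_univ_iff.2 ⟨wellFounded_lt⟩).isPWO
    have h2 : (Set.univ : Set (Fin k → ℕ)).IsPWO := Set.isPWO_of_wellQuasiOrderedLE _
    exact (h1.prod h2).mono (by simp [Set.subset_def])
  have hfin : B.Finite := hanti.finite_of_partiallyWellOrderedOn hpwo
  set L : List γ := hfin.toFinset.toList with hL
  have hmemL : ∀ y : γ, y ∈ L ↔ y ∈ B := by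
    intro y; rw [hL, Finset.mem_toList, Set.Finite.mem_toFinset]
  refine ⟨L.length, L.get, ?_, ?_⟩
  · exact fun j => ((hmemL _).1 (L.get_mem j)).1
  · have key : ∀ n : ℕ, ∀ x, x ∈ W → msr x ≤ n →
        ∃ c : Fin L.length → ℕ, x = ∑ j, c j • L.get j := by
      intro n
      induction n using Nat.strong_induction_on with
      | _ n ih =>
        intro x hx hxn
        by_cases hx0 : x = 0
        · exact ⟨0, by simp [hx0]⟩
        · set T : Set γ := {y | y ∈ W ∧ y ≠ 0 ∧ y ≤ x} with hT
          have hTne : (msr '' T).Nonempty := ⟨msr x, x, ⟨hx, hx0, le_refl x⟩, rfl⟩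
          obtain ⟨y, hyT, hymsr⟩ := Nat.sInf_mem hTne
          have hymin : ∀ z, z ∈ W → z ≠ 0 → z ≤ y → z = y := by
            intro z hz hz0 hzy
            have h1 : msr y ≤ msr z := hymsr ▸ Nat.sInf_le ⟨z, ⟨hz, hz0, le_trans hzy hyT.2.2⟩, rfl⟩
            have h2 : msr z ≤ msr y := msr_mono hzy
            have h3 : (y - z) + z = y := sub_add hzy
            have h4 : msr (y - z) = 0 := by
              have h5 := msr_add (y - z) z
              rw [h3] at h5
              omega
            rw [msr_zero _ h4, zero_add] at h3
            exact h3
          have hyL : y ∈ L := (hmemL y).2 ⟨hyT.1, hyT.2.1, hymin⟩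
          obtain ⟨j0, hj0⟩ := List.mem_iff_get.1 hyL
          have hxy : x - y ∈ W := hsub x hx y hyT.1 hyT.2.2
          have hmy : 1 ≤ msr y := by
            rcases Nat.eq_zero_or_pos (msr y) with h | h
            · exact absurd (msr_zero _ h) hyT.2.1
            · exact h
          have hms : msr (x - y) + msr y = msr x := by
            have h5 := msr_add (x - y) y
            rw [sub_add hyT.2.2] at h5
            omega
          obtain ⟨c, hc⟩ := ih (n - 1) (by omega) (x - y) hxy (by omega)
          refine ⟨fun j => c j + if j = j0 then 1 else 0, ?_⟩
          have hsplit : ∀ j, (c j + if j = j0 then 1 else 0) • L.get j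
              = c j • L.get j + (if j = j0 then L.get j else 0) := by
            intro j; by_cases hj : j = j0 <;> simp [hj, add_smul]
          rw [Finset.sum_congr rfl fun j _ => hsplit j, Finset.sum_add_distrib,
            Finset.sum_ite_eq' Finset.univ j0 (fun j => L.get j)]
          simp only [Finset.mem_univ, if_true, hj0]
          rw [← hc]
          exact (sub_add hyT.2.2).symm
    intro x hx
    exact key (msr x) x hx (le_refl _)

end Dickson


section Atomic

variable {H : Type*} [CancelCommMonoid H]

private lemma prod_erase_ones {M : Type*} [CommMonoid M] :
    ∀ l : List M, ∃ l' : List M, (∀ y ∈ l', y ∈ l ∧ y ≠ 1) ∧ l'.prod = l.prod := by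
  intro l
  induction l with
  | nil => exact ⟨[], by simp, rfl⟩
  | cons y l ih =>
    obtain ⟨l', hl'1, hl'2⟩ := ih
    by_cases hy : y = 1
    · exact ⟨l', fun z hz => ⟨List.mem_cons_of_mem _ (hl'1 z hz).1, (hl'1 z hz).2⟩,
        by simp [hy, hl'2]⟩
    · exact ⟨y :: l', fun z hz => by
        rcases List.mem_cons.1 hz with rfl | hz
        · exact ⟨List.mem_cons_self, hy⟩
        · exact ⟨List.mem_cons_of_mem _ (hl'1 z hz).1, (hl'1 z hz).2⟩,
        by simp [List.prod_cons, hl'2]⟩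

/-- Every nonunit of `Associates H` factors into irreducibles, when `Associates H` is f.g. -/
lemma assoc_atomic (hfg : Monoid.FG (Associates H)) (c : Associates H) (hc : ¬ IsUnit c) :
    ∃ l : List (Associates H), l ≠ [] ∧ (∀ y ∈ l, Irreducible y) ∧ l.prod = c := by
  classical
  obtain ⟨S, hS⟩ := Monoid.fg_def.1 hfg
  set S' : Finset (Associates H) := S.erase 1 with hS'
  set s : List (Associates H) := S'.toList with hs
  set m : ℕ := s.length with hm
  set g : Fin m → Associates H := s.get with hg
  have hg1 : ∀ i, ¬ IsUnit (g i) := by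
    intro i hu
    have h1 : g i ∈ S' := Finset.mem_toList.1 (s.get_mem i)
    rw [hS'] at h1
    exact (Finset.ne_of_mem_erase h1) ((Associates.isUnit_iff_eq_one _).1 hu)
  -- every element is a product of powers of the `g i`
  have hsurj : ∀ x : Associates H, ∃ e : Fin m → ℕ, ∏ i, g i ^ e i = x := by
    intro x
    have hx : x ∈ Submonoid.closure (S : Set (Associates H)) := by
      rw [hS]; trivial
    obtain ⟨l, hl1, hl2⟩ := Submonoid.exists_list_of_mem_closure hx
    obtain ⟨l', hl'0, hl'prod⟩ := prod_erase_ones l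
    have hl'mem : ∀ y ∈ l', ∃ i, y = g i := by
      intro y hy
      obtain ⟨h1, h2⟩ := hl'0 y hy
      have h3 : y ∈ S' := by rw [hS']; exact Finset.mem_erase.2 ⟨h2, hl1 y h1⟩
      have h4 : y ∈ s := by rw [hs]; exact Finset.mem_toList.2 h3
      obtain ⟨i, hi⟩ := List.mem_iff_get.1 h4
      exact ⟨i, hi.symm⟩
    obtain ⟨e, he1, _⟩ := hlp_list_exp g l' hl'mem
    refine ⟨e, ?_⟩
    rw [← he1, hl'prod, hl2]
  -- fibers are finite (Dickson), define the max-length measure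
  set F : Associates H → Set (Fin m → ℕ) := fun x => {e | ∏ i, g i ^ e i = x} with hF
  have hFfin : ∀ x, (F x).Finite := by
    intro x
    have hanti : IsAntichain (· ≤ ·) (F x) := by
      intro p hp q hq hne hle
      -- p ≤ q and both map to x ⟹ p = q
      have h1 : ∏ i, g i ^ q i = (∏ i, g i ^ p i) * ∏ i, g i ^ (q i - p i) := by
        rw [← Finset.prod_mul_distrib]
        refine Finset.prod_congr rfl fun i _ => ?_
        rw [← pow_add, Nat.add_sub_cancel' (hle i)]
      rw [hp, hq] at h1
      have h2 : x * 1 = x * ∏ i, g i ^ (q i - p i) := by rw [mul_one, ← h1]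
      have h3 : ∏ i, g i ^ (q i - p i) = 1 := (hlp_assoc_cancel h2).symm
      have h4 : ∀ i, q i - p i = 0 := by
        intro i
        by_contra h5
        exact hg1 i (hlp_unit_of_prod g _ i (h3 ▸ isUnit_one) h5)
      exact hne (funext fun i => Nat.le_antisymm (hle i) (by have := h4 i; omega))
    exact hanti.finite_of_partiallyWellOrderedOn
      (Set.isPWO_of_wellQuasiOrderedLE _)
  set D : Associates H → ℕ := fun x => sSup ((fun e => ∑ i, e i) '' F x) with hD
  have hDmem : ∀ x, ∃ e ∈ F x, ∑ i, e i = D x := by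
    intro x
    obtain ⟨e0, he0⟩ := hsurj x
    have hne : ((fun e => ∑ i, e i) '' F x).Nonempty := ⟨_, e0, he0, rfl⟩
    have hbdd : BddAbove ((fun e => ∑ i, e i) '' F x) := ((hFfin x).image _).bddAbove
    obtain ⟨e, he1, he2⟩ := Nat.sSup_mem hne hbdd
    exact ⟨e, he1, he2⟩
  have hDle : ∀ x, ∀ e ∈ F x, ∑ i, e i ≤ D x := by
    intro x e he
    exact le_csSup (((hFfin x).image _).bddAbove) ⟨e, he, rfl⟩
  have hDadd : ∀ x y, D x + D y ≤ D (x * y) := by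
    intro x y
    obtain ⟨ex, hex, hex2⟩ := hDmem x
    obtain ⟨ey, hey, hey2⟩ := hDmem y
    have h1 : ex + ey ∈ F (x * y) := by
      simp only [hF, Set.mem_setOf_eq] at hex hey ⊢
      rw [← hex, ← hey, ← Finset.prod_mul_distrib]
      exact Finset.prod_congr rfl fun i _ => by rw [Pi.add_apply, pow_add]
    have h2 := hDle (x * y) _ h1
    simp only [Pi.add_apply, Finset.sum_add_distrib, hex2, hey2] at h2
    exact h2
  have hDpos : ∀ x, ¬ IsUnit x → 1 ≤ D x := by
    intro x hx
    obtain ⟨e, he, he2⟩ := hDmem x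
    rcases Nat.eq_zero_or_pos (D x) with h | h
    · exfalso
      rw [h] at he2
      have : e = 0 := funext fun i => Finset.sum_eq_zero_iff.1 he2 i (Finset.mem_univ i)
      rw [this] at he
      simp only [hF, Set.mem_setOf_eq, pow_zero, Pi.zero_apply] at he
      rw [Finset.prod_const_one] at he
      exact hx (he ▸ isUnit_one)
    · exact h
  -- strong induction on `D c`
  have key : ∀ n : ℕ, ∀ x : Associates H, ¬ IsUnit x → D x ≤ n →
      ∃ l : List (Associates H), l ≠ [] ∧ (∀ y ∈ l, Irreducible y) ∧ l.prod = x := by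
    intro n
    induction n using Nat.strong_induction_on with
    | _ n ih =>
      intro x hx hxn
      by_cases hirr : Irreducible x
      · exact ⟨[x], by simp, by simpa using hirr, by simp⟩
      · have h1 : ∃ u v : Associates H, x = u * v ∧ ¬ IsUnit u ∧ ¬ IsUnit v := by
          rw [irreducible_iff] at hirr
          push_neg at hirr
          obtain ⟨u, v, h2, h3, h4⟩ := hirr hx
          exact ⟨u, v, h2, h3, h4⟩
        obtain ⟨u, v, rfl, hu, hv⟩ := h1
        have h2 : D u + D v ≤ n := le_trans (hDadd u v) hxn
        have h3 := hDpos u hu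
        have h4 := hDpos v hv
        obtain ⟨lu, _, hlu2, hlu3⟩ := ih (n - 1) (by omega) u hu (by omega)
        obtain ⟨lv, hlv1, hlv2, hlv3⟩ := ih (n - 1) (by omega) v hv (by omega)
        refine ⟨lu ++ lv, by simp [hlv1], ?_, by rw [List.prod_append, hlu3, hlv3]⟩
        intro y hy
        rcases List.mem_append.1 hy with hy | hy
        · exact hlu2 y hy
        · exact hlv2 y hy
  exact key (D c) c hc (le_refl _)

end Atomic

section MainAux

variable {H : Type*} [CancelCommMonoid H]

private lemma lengthSet_of_not_isUnit {x : H} (h : ¬ IsUnit x) :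
    lengthSet H x = {k | ∃ f : Fin k → H, (∀ i, Irreducible (f i)) ∧ x = ∏ i, f i} := by
  simp [lengthSet, h]

private lemma hlp_mk_prod {k : ℕ} (v : Fin k → H) :
    Associates.mk (∏ i, v i) = ∏ i, Associates.mk (v i) :=
  map_prod (Associates.mkMonoidHom (M := H)) v Finset.univ

private lemma hlp_mk_prod_pow {k : ℕ} (v : Fin k → H) (e : Fin k → ℕ) :
    Associates.mk (∏ i, v i ^ e i) = ∏ i, Associates.mk (v i) ^ e i := by
  rw [hlp_mk_prod]
  exact Finset.prod_congr rfl fun i _ => Associates.mk_pow _ _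

private lemma elasticity_of_not_isUnit {x : H} (h : ¬ IsUnit x) :
    elasticity H x = ((sSup (lengthSet H x) : ℕ) : ℝ) / ((sInf (lengthSet H x) : ℕ) : ℝ) := by
  simp [elasticity, h]

end MainAux

set_option maxHeartbeats 2000000 in
/-- If `H_red = H/H^×` is finitely generated, then for every nonunit
`a ∈ H` there is `N ∈ ℕ` with `ρ(a^{tN}) = ρ(a^N)` for all `t ∈ ℕ`, and the limit
`ρ̄(a) = lim ρ(aⁿ)` exists and equals `ρ(a^N)`. -/
theorem statement7 (H : Type*) [CancelCommMonoid H]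
    (hfg : Monoid.FG (Associates H)) (a : H) (ha : ¬ IsUnit a) :
    ∃ N : ℕ, 0 < N ∧
      (∀ t : ℕ, 0 < t → elasticity H (a ^ (t * N)) = elasticity H (a ^ N)) ∧
      Tendsto (fun n : ℕ => elasticity H (a ^ n)) atTop (nhds (elasticity H (a ^ N))) := by
  classical
  -- nonunit powers
  have hnu : ∀ n : ℕ, 1 ≤ n → ¬ IsUnit (a ^ n) := by
    intro n hn h
    exact ha ((isUnit_pow_iff (by omega)).1 h)
  -- enumerate the atoms of `Associates H` (all lie in the generating set)
  obtain ⟨S, hS⟩ := Monoid.fg_def.1 hfg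
  set T : Finset (Associates H) := S.filter (fun x => Irreducible x) with hT
  set k : ℕ := T.toList.length with hk
  set u : Fin k → Associates H := T.toList.get with hu
  have hu_irr : ∀ i, Irreducible (u i) := by
    intro i
    have h1 : u i ∈ T := Finset.mem_toList.1 (T.toList.get_mem i)
    rw [hT] at h1
    exact (Finset.mem_filter.1 h1).2
  have hu_cover : ∀ v : Associates H, Irreducible v → ∃ i, v = u i := by
    intro v hv
    have hvS : v ∈ S := by
      have hvcl : v ∈ Submonoid.closure (S : Set (Associates H)) := by rw [hS]; trivial
      obtain ⟨l, hl1, hl2⟩ := Submonoid.exists_list_of_mem_closure hvcl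
      obtain ⟨l', hl'0, hl'prod⟩ := prod_erase_ones l
      rcases l' with _ | ⟨y, _ | ⟨z, rest⟩⟩
      · exact absurd (by rw [← hl2, ← hl'prod]; simp : IsUnit v) hv.not_isUnit
      · have hvy : v = y := by rw [← hl2, ← hl'prod]; simp
        exact hvy ▸ hl1 y (hl'0 y (by simp)).1
      · exfalso
        have hprod : v = y * (z :: rest).prod := by rw [← hl2, ← hl'prod, List.prod_cons]
        rcases hv.isUnit_or_isUnit hprod with h | h
        · exact (hl'0 y (by simp)).2 ((Associates.isUnit_iff_eq_one y).1 h)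
        · have hz : IsUnit z := isUnit_of_mul_isUnit_left
            (by rw [← List.prod_cons]; exact h)
          exact (hl'0 z (by simp)).2 ((Associates.isUnit_iff_eq_one z).1 hz)
    have hvT : v ∈ T := by rw [hT]; exact Finset.mem_filter.2 ⟨hvS, hv⟩
    obtain ⟨i, hi⟩ := List.mem_iff_get.1 (Finset.mem_toList.2 hvT)
    exact ⟨i, hi.symm⟩
  -- the solution monoid W
  set A : Associates H := Associates.mk a with hA
  set W : Set (ℕ × (Fin k → ℕ)) := {p | A ^ p.1 = ∏ i, u i ^ p.2 i} with hW
  have hWadd : ∀ x ∈ W, ∀ y ∈ W, x + y ∈ W := by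
    intro x hx y hy
    simp only [hW, Set.mem_setOf_eq] at hx hy ⊢
    rw [Prod.fst_add, pow_add, hx, hy, ← Finset.prod_mul_distrib]
    exact Finset.prod_congr rfl fun i _ => by
      rw [Prod.snd_add, Pi.add_apply, pow_add]
  have hWzero : (0 : ℕ × (Fin k → ℕ)) ∈ W := by
    simp [hW]
  have hWsmul : ∀ (t : ℕ), ∀ x ∈ W, t • x ∈ W := by
    intro t x hx
    induction t with
    | zero => simpa using hWzero
    | succ t ih => rw [succ_nsmul]; exact hWadd _ ih _ hx
  have hWsub : ∀ x ∈ W, ∀ y ∈ W, y ≤ x → x - y ∈ W := by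
    intro x hx y hy hle
    obtain ⟨h1, h2⟩ := Prod.le_def.1 hle
    simp only [hW, Set.mem_setOf_eq] at hx hy ⊢
    have key : A ^ y.1 * A ^ (x.1 - y.1) = A ^ y.1 * ∏ i, u i ^ (x.2 i - y.2 i) := by
      rw [← pow_add, Nat.add_sub_cancel' h1, hx, hy]
      rw [← Finset.prod_mul_distrib]
      exact Finset.prod_congr rfl fun i _ => by
        rw [← pow_add, Nat.add_sub_cancel' (h2 i)]
    have := hlp_assoc_cancel key
    simpa using this
  -- length sets vs solutions of W
  have hlen : ∀ n : ℕ, 1 ≤ n → ∀ ℓ : ℕ,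
      ℓ ∈ lengthSet H (a ^ n) ↔ ∃ e : Fin k → ℕ, (n, e) ∈ W ∧ ∑ i, e i = ℓ := by
    intro n hn ℓ
    rw [lengthSet_of_not_isUnit (hnu n hn)]
    constructor
    · rintro ⟨f, hf1, hf2⟩
      set l : List (Associates H) := List.ofFn (fun i => Associates.mk (f i)) with hl
      have hlmem : ∀ y ∈ l, ∃ i, y = u i := by
        intro y hy
        rw [hl, List.mem_ofFn] at hy
        obtain ⟨i, rfl⟩ := hy
        exact hu_cover _ (hlp_irr_mk.2 (hf1 i))
      obtain ⟨e, he1, he2⟩ := hlp_list_exp u l hlmem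
      refine ⟨e, ?_, by rw [he2, hl, List.length_ofFn]⟩
      simp only [hW, Set.mem_setOf_eq]
      rw [← he1, hl, List.prod_ofFn, hA, ← Associates.mk_pow, hf2]
      exact hlp_mk_prod (fun i => f i)
    · rintro ⟨e, heW, rfl⟩
      -- choose irreducible representatives
      have hrep : ∀ i, ∃ b : H, Associates.mk b = u i ∧ Irreducible b := by
        intro i
        obtain ⟨b, hb⟩ := Associates.mk_surjective (u i)
        exact ⟨b, hb, hlp_irr_mk.1 (hb ▸ hu_irr i)⟩
      choose v hv1 hv2 using hrep
      obtain ⟨l, hl1, hl2, hl3⟩ := hlp_exp_list v e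
      have hassoc : Associated l.prod (a ^ n) := by
        rw [← Associates.mk_eq_mk_iff_associated, hl3]
        rw [hlp_mk_prod_pow]
        simp only [hv1]
        rw [Associates.mk_pow]
        exact (heW).symm
      obtain ⟨c, hc⟩ := hassoc
      have hℓ1 : 1 ≤ ∑ i, e i := by
        by_contra h
        have he0 : e = 0 := by
          have : ∑ i, e i = 0 := by omega
          exact funext fun i => Finset.sum_eq_zero_iff.1 this i (Finset.mem_univ i)
        rw [he0] at heW
        simp only [hW, Set.mem_setOf_eq, Pi.zero_apply, pow_zero,
          Finset.prod_const_one] at heW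
        refine hnu n hn (Associates.mk_eq_one.1 ?_)
        rw [Associates.mk_pow, ← hA]
        exact heW
      have hlne : l ≠ [] := by
        intro h
        rw [h] at hl2
        simp at hl2
        omega
      obtain ⟨hd, tl, rfl⟩ := List.exists_cons_of_ne_nil hlne
      set l2 : List H := (hd * (c : H)) :: tl with hl2'
      have hl2prod : a ^ n = l2.prod := by
        rw [hl2', List.prod_cons, ← hc, List.prod_cons]
        exact mul_right_comm hd tl.prod (c : H)
      have hl2len : l2.length = ∑ i, e i := by
        rw [hl2', List.length_cons]
        rw [List.length_cons] at hl2
        exact hl2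
      have hl2irr : ∀ y ∈ l2, Irreducible y := by
        intro y hy
        rcases List.mem_cons.1 hy with rfl | hy
        · obtain ⟨i, hi, _⟩ := hl1 hd (List.mem_cons_self)
          exact Associated.irreducible ⟨c, rfl⟩ (by rw [hi]; exact hv2 i)
        · obtain ⟨i, hi, _⟩ := hl1 y (List.mem_cons_of_mem _ hy)
          rw [hi]; exact hv2 i
      rw [← hl2len]
      refine ⟨fun i => l2.get i, fun i => hl2irr _ (l2.get_mem i), ?_⟩
      rw [hl2prod]
      conv_lhs => rw [← List.ofFn_get l2]
      rw [List.prod_ofFn]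
  -- a factorization of `a` itself
  have he0ex : ∃ e0 : Fin k → ℕ, ((1 : ℕ), e0) ∈ W ∧ 1 ≤ ∑ i, e0 i := by
    obtain ⟨l, hlne, hlirr, hlprod⟩ := assoc_atomic hfg A
      (by rw [hA, Associates.isUnit_mk]; exact ha)
    obtain ⟨e, he1, he2⟩ := hlp_list_exp u l (fun y hy => hu_cover y (hlirr y hy))
    refine ⟨e, ?_, ?_⟩
    · simp only [hW, Set.mem_setOf_eq]
      rw [pow_one, ← he1, hlprod]
    · rw [he2]
      cases l with
      | nil => exact absurd rfl hlne
      | cons x l => simp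
  obtain ⟨e0, he0W, hℓ0pos⟩ := he0ex
  set ℓ0 : ℕ := ∑ i, e0 i with hℓ0def
  -- finitely many generators for W
  obtain ⟨m, G, hGW, hGgen⟩ := dickson_fg W hWadd hWsub
  set nn : Fin m → ℕ := fun j => (G j).1 with hnn
  set ll : Fin m → ℕ := fun j => ∑ i, (G j).2 i with hll
  have hdeg : ∀ j, nn j = 0 → ll j = 0 := by
    intro j hj
    have h1 := hGW j
    simp only [hW, Set.mem_setOf_eq] at h1
    rw [hnn] at hj
    simp only at hj
    rw [hj, pow_zero] at h1
    have h2 : ∀ i, (G j).2 i = 0 := by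
      intro i
      by_contra h3
      exact (hu_irr i).not_isUnit (hlp_unit_of_prod u _ i (h1 ▸ isUnit_one) h3)
    rw [hll]
    exact Finset.sum_eq_zero fun i _ => h2 i
  have hpos : ∀ j, 1 ≤ nn j → 1 ≤ ll j := by
    intro j hj
    by_contra h
    have hz : ∀ i, (G j).2 i = 0 := by
      intro i
      have h4 : ll j = 0 := by omega
      rw [hll] at h4
      exact Finset.sum_eq_zero_iff.1 h4 i (Finset.mem_univ i)
    have h1 := hGW j
    simp only [hW, Set.mem_setOf_eq] at h1
    have h2 : A ^ nn j = 1 := by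
      rw [hnn]
      simp only
      rw [h1]
      exact Finset.prod_eq_one fun i _ => by rw [hz i, pow_zero]
    refine hnu (nn j) hj (Associates.mk_eq_one.1 ?_)
    rw [Associates.mk_pow, ← hA]
    exact h2
  -- decomposition of elements of W along the generators
  have hdecomp : ∀ p ∈ W, ∃ c : Fin m → ℕ,
      p.1 = ∑ j, c j * nn j ∧ ∑ i, p.2 i = ∑ j, c j * ll j := by
    intro p hp
    obtain ⟨c, hc⟩ := hGgen p hp
    refine ⟨c, ?_, ?_⟩
    · rw [hc, Prod.fst_sum]
      exact Finset.sum_congr rfl fun j _ => rfl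
    · rw [hc, Prod.snd_sum]
      have h1 : ∀ i : Fin k, (∑ j, (c j • G j).2) i = ∑ j, c j * (G j).2 i := by
        intro i
        rw [Finset.sum_apply]
        exact Finset.sum_congr rfl fun j _ => by simp [smul_eq_mul]
      rw [Finset.sum_congr rfl fun i _ => h1 i, Finset.sum_comm]
      refine Finset.sum_congr rfl fun j _ => ?_
      rw [← Finset.mul_sum, hll]
  -- existence of a generator with positive first coordinate
  have hJex : ∃ j, 1 ≤ nn j := by
    obtain ⟨c, hc1, _⟩ := hdecomp ((1 : ℕ), e0) he0W
    by_contra h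
    push_neg at h
    have hzero : ∀ j, nn j = 0 := fun j => by have := h j; omega
    simp only [hzero, mul_zero, Finset.sum_const_zero] at hc1
    exact one_ne_zero hc1
  set J : Finset (Fin m) := Finset.univ.filter (fun j => 1 ≤ nn j) with hJ
  have hJne : J.Nonempty := by
    obtain ⟨j, hj⟩ := hJex
    exact ⟨j, by rw [hJ]; simp [hj]⟩
  obtain ⟨jM, hjMJ, hjMmax⟩ := J.exists_max_image (fun j => (ll j : ℚ) / nn j) hJne
  obtain ⟨jm, hjmJ, hjmmin⟩ := J.exists_min_image (fun j => (ll j : ℚ) / nn j) hJne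
  have hjM1 : 1 ≤ nn jM := by
    have := hjMJ; rw [hJ] at this; exact (Finset.mem_filter.1 this).2
  have hjm1 : 1 ≤ nn jm := by
    have := hjmJ; rw [hJ] at this; exact (Finset.mem_filter.1 this).2
  have hmax : ∀ j, 1 ≤ nn j → ll j * nn jM ≤ ll jM * nn j := by
    intro j hj
    have h1 := hjMmax j (by rw [hJ]; simp [hj])
    rw [div_le_div_iff₀ (by exact_mod_cast hj) (by exact_mod_cast hjM1)] at h1
    exact_mod_cast h1
  have hmin : ∀ j, 1 ≤ nn j → ll jm * nn j ≤ ll j * nn jm := by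
    intro j hj
    have h1 := hjmmin j (by rw [hJ]; simp [hj])
    rw [div_le_div_iff₀ (by exact_mod_cast hjm1) (by exact_mod_cast hj)] at h1
    exact_mod_cast h1
  -- the two key linear bounds
  have hK1 : ∀ p ∈ W, (∑ i, p.2 i) * nn jM ≤ p.1 * ll jM := by
    intro p hp
    obtain ⟨c, hc1, hc2⟩ := hdecomp p hp
    rw [hc1, hc2, Finset.sum_mul, Finset.sum_mul]
    refine Finset.sum_le_sum fun j _ => ?_
    rcases Nat.eq_zero_or_pos (nn j) with h | h
    · rw [hdeg j h]; simp
    · calc c j * ll j * nn jM = c j * (ll j * nn jM) := by ring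
        _ ≤ c j * (ll jM * nn j) := Nat.mul_le_mul_left _ (hmax j h)
        _ = c j * nn j * ll jM := by ring
  have hK2 : ∀ p ∈ W, p.1 * ll jm ≤ (∑ i, p.2 i) * nn jm := by
    intro p hp
    obtain ⟨c, hc1, hc2⟩ := hdecomp p hp
    rw [hc1, hc2, Finset.sum_mul, Finset.sum_mul]
    refine Finset.sum_le_sum fun j _ => ?_
    rcases Nat.eq_zero_or_pos (nn j) with h | h
    · rw [h]; simp
    · calc c j * nn j * ll jm = c j * (ll jm * nn j) := by ring
        _ ≤ c j * (ll j * nn jm) := Nat.mul_le_mul_left _ (hmin j h)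
        _ = c j * ll j * nn jm := by ring
  -- the period N
  set N : ℕ := ∏ j ∈ J, nn j with hNdef
  have hN1 : 1 ≤ N := by
    rw [hNdef]
    have h1 : (0 : ℕ) < ∏ j ∈ J, nn j := by
      refine Finset.prod_pos fun j hj => ?_
      rw [hJ] at hj
      exact (Finset.mem_filter.1 hj).2
    omega
  set qM : ℕ := N / nn jM with hqMdef
  set qm : ℕ := N / nn jm with hqmdef
  have hqMn : qM * nn jM = N := Nat.div_mul_cancel (Finset.dvd_prod_of_mem nn hjMJ)
  have hqmn : qm * nn jm = N := Nat.div_mul_cancel (Finset.dvd_prod_of_mem nn hjmJ)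
  set μ : ℕ := qM * ll jM with hμdef
  set ν : ℕ := qm * ll jm with hνdef
  -- witnesses in length sets
  have hcoord : ∀ (r s : ℕ) (x y : ℕ × (Fin k → ℕ)),
      (r • x + s • y).1 = r * x.1 + s * y.1 ∧
      ∑ i, (r • x + s • y).2 i = r * (∑ i, x.2 i) + s * (∑ i, y.2 i) := by
    intro r s x y
    refine ⟨rfl, ?_⟩
    simp [Finset.sum_add_distrib, Finset.mul_sum]
  have hwit : ∀ (r s : ℕ) (j : Fin m),
      (r * 1 + s * nn j : ℕ) ≥ 1 → (r * ℓ0 + s * ll j) ∈ lengthSet H (a ^ (r + s * nn j)) := by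
    intro r s j h1
    have hmem : r • ((1 : ℕ), e0) + s • G j ∈ W :=
      hWadd _ (hWsmul r _ he0W) _ (hWsmul s _ (hGW j))
    obtain ⟨hc1, hc2⟩ := hcoord r s ((1 : ℕ), e0) (G j)
    have h2 := (hlen (r + s * nn j) (by omega) (r * ℓ0 + s * ll j)).2 ?_
    · exact h2
    · refine ⟨(r • ((1 : ℕ), e0) + s • G j).2, ?_, ?_⟩
      · have h3 : (r + s * nn j, (r • ((1 : ℕ), e0) + s • G j).2)
            = r • ((1 : ℕ), e0) + s • G j := by
          refine Prod.ext ?_ rfl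
          rw [hc1]; simp [hnn]
        rw [h3]
        exact hmem
      · rw [hc2, hℓ0def, hll]
  -- bounds on all length sets
  have hub : ∀ n, 1 ≤ n → ∀ ℓ ∈ lengthSet H (a ^ n), ℓ * nn jM ≤ n * ll jM := by
    intro n hn ℓ hℓ
    obtain ⟨e, heW, rfl⟩ := (hlen n hn ℓ).1 hℓ
    exact hK1 (n, e) heW
  have hlb : ∀ n, 1 ≤ n → ∀ ℓ ∈ lengthSet H (a ^ n), n * ll jm ≤ ℓ * nn jm := by
    intro n hn ℓ hℓ
    obtain ⟨e, heW, rfl⟩ := (hlen n hn ℓ).1 hℓ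
    exact hK2 (n, e) heW
  have hbdd : ∀ n, 1 ≤ n → BddAbove (lengthSet H (a ^ n)) := by
    intro n hn
    refine ⟨n * ll jM, fun ℓ hℓ => ?_⟩
    calc ℓ ≤ ℓ * nn jM := Nat.le_mul_of_pos_right ℓ hjM1
      _ ≤ n * ll jM := hub n hn ℓ hℓ
  have hΛne : ∀ n, 1 ≤ n → (n * ℓ0) ∈ lengthSet H (a ^ n) := by
    intro n hn
    have := hwit n 0 jM (by omega)
    simpa using this
  -- values of sup and inf at multiples of N
  have hsupN : ∀ t, 1 ≤ t → sSup (lengthSet H (a ^ (t * N))) = t * μ := by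
    intro t ht
    have htN : 1 ≤ t * N := le_trans ht (Nat.le_mul_of_pos_right t hN1)
    apply le_antisymm
    · refine csSup_le ⟨t * N * ℓ0, hΛne _ htN⟩ fun ℓ hℓ => ?_
      have h1 := hub _ htN ℓ hℓ
      have h2 : t * N * ll jM = t * μ * nn jM := by
        rw [hμdef]
        calc t * N * ll jM = t * (qM * nn jM) * ll jM := by rw [hqMn]
          _ = t * (qM * ll jM) * nn jM := by ring
      rw [h2] at h1
      exact Nat.le_of_mul_le_mul_right h1 hjM1
    · refine le_csSup (hbdd _ htN) ?_
      have := hwit 0 (t * qM) jM (by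
        have : 1 ≤ t * qM * nn jM := by
          rw [mul_assoc, hqMn]; exact htN
        omega)
      simp only [zero_mul, zero_add] at this
      have heq : t * qM * nn jM = t * N := by rw [mul_assoc, hqMn]
      have heq2 : t * qM * ll jM = t * μ := by rw [hμdef]; ring
      rw [heq, heq2] at this
      exact this
  have hinfN : ∀ t, 1 ≤ t → sInf (lengthSet H (a ^ (t * N))) = t * ν := by
    intro t ht
    have htN : 1 ≤ t * N := le_trans ht (Nat.le_mul_of_pos_right t hN1)
    apply le_antisymm
    · refine csInf_le (OrderBot.bddBelow _) ?_
      have := hwit 0 (t * qm) jm (by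
        have : 1 ≤ t * qm * nn jm := by rw [mul_assoc, hqmn]; exact htN
        omega)
      simp only [zero_mul, zero_add] at this
      have heq : t * qm * nn jm = t * N := by rw [mul_assoc, hqmn]
      have heq2 : t * qm * ll jm = t * ν := by rw [hνdef]; ring
      rw [heq, heq2] at this
      exact this
    · refine le_csInf ⟨t * N * ℓ0, hΛne _ htN⟩ fun ℓ hℓ => ?_
      have h1 := hlb _ htN ℓ hℓ
      have h2 : t * N * ll jm = t * ν * nn jm := by
        rw [hνdef]
        calc t * N * ll jm = t * (qm * nn jm) * ll jm := by rw [hqmn]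
          _ = t * (qm * ll jm) * nn jm := by ring
      rw [h2] at h1
      exact Nat.le_of_mul_le_mul_right h1 hjm1
  -- ### final assembly ###
  have hNne : N ≠ 0 := by omega
  refine ⟨N, by omega, ?_, ?_⟩
  · -- periodicity of the elasticity
    intro t ht
    have htN : 1 ≤ t * N := le_trans ht (Nat.le_mul_of_pos_right t hN1)
    rw [elasticity_of_not_isUnit (hnu _ htN), elasticity_of_not_isUnit (hnu N hN1)]
    have h3 := hsupN 1 le_rfl
    have h4 := hinfN 1 le_rfl
    simp only [one_mul] at h3 h4
    rw [hsupN t ht, hinfN t ht, h3, h4]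
    push_cast
    rw [mul_div_mul_left _ _ (by exact_mod_cast (by omega : t ≠ 0) : (t : ℝ) ≠ 0)]
  · -- convergence
    set AA : ℝ := (ll jM : ℝ) / (nn jM : ℝ) with hAA
    set BB : ℝ := (ll jm : ℝ) / (nn jm : ℝ) with hBB
    have hN0R : (N : ℝ) ≠ 0 := by exact_mod_cast hNne
    have hNposR : (0 : ℝ) < N := by positivity
    have hjM0R : (0 : ℝ) < (nn jM : ℝ) := by exact_mod_cast hjM1
    have hjm0R : (0 : ℝ) < (nn jm : ℝ) := by exact_mod_cast hjm1
    have hμR : (μ : ℝ) = N * AA := by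
      have hnat : μ * nn jM = N * ll jM := by rw [hμdef, ← hqMn]; ring
      rw [hAA, ← mul_div_assoc, eq_div_iff (ne_of_gt hjM0R)]
      exact_mod_cast hnat
    have hνR : (ν : ℝ) = N * BB := by
      have hnat : ν * nn jm = N * ll jm := by rw [hνdef, ← hqmn]; ring
      rw [hBB, ← mul_div_assoc, eq_div_iff (ne_of_gt hjm0R)]
      exact_mod_cast hnat
    have hAAμ : AA = (μ : ℝ) / N := by rw [hμR, mul_div_cancel_left₀ _ hN0R]
    have hBBν : BB = (ν : ℝ) / N := by rw [hνR, mul_div_cancel_left₀ _ hN0R]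
    have hBB0 : 0 < BB := by
      rw [hBB]
      have h1 : (0 : ℝ) < (ll jm : ℝ) := by exact_mod_cast hpos jm hjm1
      exact div_pos h1 hjm0R
    have hval : elasticity H (a ^ N) = AA / BB := by
      rw [elasticity_of_not_isUnit (hnu N hN1)]
      have h3 := hsupN 1 le_rfl
      have h4 := hinfN 1 le_rfl
      simp only [one_mul] at h3 h4
      rw [h3, h4, hμR, hνR, mul_div_mul_left _ _ hN0R]
    set MS : ℕ → ℕ := fun n => sSup (lengthSet H (a ^ n)) with hMS
    set IS : ℕ → ℕ := fun n => sInf (lengthSet H (a ^ n)) with hIS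
    -- sup / n tends to AA
    have htop : Tendsto (fun n : ℕ => (MS n : ℝ) / n) atTop (nhds AA) := by
      refine tendsto_of_tendsto_of_tendsto_of_le_of_le'
        (g := fun n : ℕ => AA - (μ : ℝ) / n) (h := fun _ : ℕ => AA)
        ?_ tendsto_const_nhds ?_ ?_
      · have h1 : Tendsto (fun n : ℕ => AA - (μ : ℝ) / n) atTop (nhds (AA - 0)) :=
          Tendsto.sub tendsto_const_nhds (tendsto_const_div_atTop_nhds_zero_nat _)
        simpa using h1
      · -- lower bound, for n ≥ N
        rw [eventually_atTop]
        refine ⟨N, fun n hn => ?_⟩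
        have hn1 : 1 ≤ n := le_trans hN1 hn
        have hn0R : (0 : ℝ) < n := by exact_mod_cast hn1
        -- MS n ≥ (n / N) * μ
        have hwq := hwit (n % N) ((n / N) * qM) jM (by
          rw [mul_one, mul_assoc, hqMn, Nat.mod_add_div']
          exact le_trans hN1 hn)
        have hco1 : n % N + n / N * qM * nn jM = n := by
          rw [mul_assoc, hqMn]
          exact Nat.mod_add_div' n N
        have hco2 : n % N * ℓ0 + n / N * qM * ll jM = n % N * ℓ0 + n / N * μ := by
          rw [hμdef]; ring
        rw [hco1, hco2] at hwq
        have h2 : (n / N) * μ ≤ MS n := by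
          refine le_trans (Nat.le_add_left _ _) (le_csSup (hbdd n hn1) hwq)
        -- floor bound
        have hq : (n : ℝ) / N - 1 ≤ ((n / N : ℕ) : ℝ) := by
          have h3 : n ≤ (n / N + 1) * N := by
            have h5 := Nat.mod_add_div n N
            have h6 : n % N < N := Nat.mod_lt _ (by omega)
            nlinarith
          rw [sub_le_iff_le_add, div_le_iff₀ hNposR]
          calc (n : ℝ) ≤ ((n / N + 1) * N : ℕ) := by exact_mod_cast h3
            _ = (((n / N : ℕ) : ℝ) + 1) * N := by push_cast; ring
        have h6 : ((n : ℝ) / N - 1) * μ ≤ ((n / N : ℕ) : ℝ) * μ :=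
          mul_le_mul_of_nonneg_right hq (Nat.cast_nonneg μ)
        have h7 : ((n / N : ℕ) : ℝ) * (μ : ℝ) ≤ (MS n : ℝ) := by exact_mod_cast h2
        calc AA - (μ : ℝ) / n = ((n : ℝ) / N - 1) * μ / n := by
              rw [hAAμ]; field_simp
          _ ≤ ((n / N : ℕ) : ℝ) * μ / n := by
              gcongr <;> first | exact h6 | positivity
          _ ≤ (MS n : ℝ) / n := by
              gcongr <;> first | exact h7 | positivity
      · -- upper bound, for n ≥ N
        rw [eventually_atTop]
        refine ⟨N, fun n hn => ?_⟩
        have hn1 : 1 ≤ n := le_trans hN1 hn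
        have hn0R : (0 : ℝ) < n := by exact_mod_cast hn1
        have hmem : MS n ∈ lengthSet H (a ^ n) :=
          Nat.sSup_mem ⟨n * ℓ0, hΛne n hn1⟩ (hbdd n hn1)
        have h1 := hub n hn1 (MS n) hmem
        rw [hAA, div_le_div_iff₀ hn0R hjM0R]
        calc (MS n : ℝ) * nn jM ≤ (n : ℝ) * ll jM := by exact_mod_cast h1
          _ = (ll jM : ℝ) * n := by ring
    -- inf / n tends to BB
    have hbot : Tendsto (fun n : ℕ => (IS n : ℝ) / n) atTop (nhds BB) := by
      refine tendsto_of_tendsto_of_tendsto_of_le_of_le'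
        (g := fun _ : ℕ => BB) (h := fun n : ℕ => BB + (N * ℓ0 : ℝ) / n)
        tendsto_const_nhds ?_ ?_ ?_
      · have h1 : Tendsto (fun n : ℕ => BB + ((N : ℝ) * ℓ0) / n) atTop (nhds (BB + 0)) :=
          Tendsto.add tendsto_const_nhds (tendsto_const_div_atTop_nhds_zero_nat _)
        simpa using h1
      · -- lower bound
        rw [eventually_atTop]
        refine ⟨N, fun n hn => ?_⟩
        have hn1 : 1 ≤ n := le_trans hN1 hn
        have hn0R : (0 : ℝ) < n := by exact_mod_cast hn1
        have hmem : IS n ∈ lengthSet H (a ^ n) := Nat.sInf_mem ⟨n * ℓ0, hΛne n hn1⟩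
        have h1 := hlb n hn1 (IS n) hmem
        rw [hBB, div_le_div_iff₀ hjm0R hn0R]
        calc (ll jm : ℝ) * n = (n : ℝ) * ll jm := by ring
          _ ≤ (IS n : ℝ) * nn jm := by exact_mod_cast h1
      · -- upper bound
        rw [eventually_atTop]
        refine ⟨N, fun n hn => ?_⟩
        have hn1 : 1 ≤ n := le_trans hN1 hn
        have hn0R : (0 : ℝ) < n := by exact_mod_cast hn1
        have hwq := hwit (n % N) ((n / N) * qm) jm (by
          rw [mul_one, mul_assoc, hqmn, Nat.mod_add_div']
          exact le_trans hN1 hn)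
        have hco1 : n % N + n / N * qm * nn jm = n := by
          rw [mul_assoc, hqmn]
          exact Nat.mod_add_div' n N
        have hco2 : n % N * ℓ0 + n / N * qm * ll jm = n % N * ℓ0 + n / N * ν := by
          rw [hνdef]; ring
        rw [hco1, hco2] at hwq
        have h2 : IS n ≤ n % N * ℓ0 + n / N * ν := csInf_le (OrderBot.bddBelow _) hwq
        have h3 : ((n / N : ℕ) : ℝ) ≤ (n : ℝ) / N := Nat.cast_div_le
        have h4 : ((n % N : ℕ) : ℝ) ≤ (N : ℝ) := by
          have h6 : n % N < N := Nat.mod_lt _ (by omega)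
          exact_mod_cast le_of_lt h6
        have h2R : (IS n : ℝ) ≤ ((n % N : ℕ) : ℝ) * ℓ0 + ((n / N : ℕ) : ℝ) * ν := by
          exact_mod_cast h2
        have hsw : ((n : ℝ) / N) * ν / n = (ν : ℝ) / N := by
          rw [show ((n : ℝ) / N) * ν / n = (ν : ℝ) / N * (n / n) by ring, div_self hn0R.ne',
            mul_one]
        calc (IS n : ℝ) / n ≤ (((n % N : ℕ) : ℝ) * ℓ0 + ((n / N : ℕ) : ℝ) * ν) / n := by
              gcongr <;> first | exact h2R | positivity
          _ ≤ ((N : ℝ) * ℓ0 + ((n : ℝ) / N) * ν) / n := by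
              gcongr <;> first | exact h4 | exact h3 | positivity
          _ = (N : ℝ) * ℓ0 / n + ((n : ℝ) / N) * ν / n := by rw [add_div]
          _ = (N : ℝ) * ℓ0 / n + BB := by rw [hsw, hBBν]
          _ = BB + (N * ℓ0 : ℝ) / n := by ring
    -- combine
    have hdiv := htop.div hbot (ne_of_gt hBB0)
    rw [hval]
    refine Tendsto.congr' ?_ hdiv
    rw [Filter.eventuallyEq_iff_exists_mem]
    refine ⟨{n : ℕ | N ≤ n}, mem_atTop N, fun n hn => ?_⟩
    have hn1 : 1 ≤ n := le_trans hN1 hn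
    have hn0R : (n : ℝ) ≠ 0 := by
      have : (0 : ℝ) < n := by exact_mod_cast hn1
      exact ne_of_gt this
    simp only [Pi.div_apply]
    rw [div_div_div_comm, div_self hn0R, div_one, elasticity_of_not_isUnit (hnu n hn1)]
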